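/- Let P = [a] × [2b] with the partial order (x,y) ⪯ (z,t) iff (x,y)=(z,t), or (x<z and y<t), or (y ≤ b and t ≥ b+1 and y < t-b). Every antichain of P is contained in a path from (1, b+h) to (a, h) for some 1 ≤ h ≤ b, where steps along the path are (1,0) or (0,-1). -/

import Mathlib

/-- A step moves one unit down `(1,0)` or one unit left `(0,-1)`. -/
def Step (p q : ℤ × ℤ) : Prop := q = p + (1, 0) ∨ q = p + (0, -1)

/-- `l` is a path starting at `p` and ending at `q`, each consecutive
difference being `(1,0)` or `(0,-1)`. -/
def IsPathFromTo (l : List (ℤ × ℤ)) (p q : ℤ × ℤ) : Prop :=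
  l.Chain' Step ∧ l.head? = some p ∧ l.getLast? = some q

/-- Membership in the poset `P = [a] × [2b]`, viewed inside `ℤ × ℤ`. -/
def memP (a b : ℕ) (p : ℤ × ℤ) : Prop :=
  1 ≤ p.1 ∧ p.1 ≤ (a : ℤ) ∧ 1 ≤ p.2 ∧ p.2 ≤ 2 * (b : ℤ)

/-- The partial order on `P = [a] × [2b]`:
`(x,y) ⪯ (z,t)` iff `(x,y) = (z,t)`, or `x < z` and `y < t`,
or `y ≤ b`, `t ≥ b+1` and `y < t - b`. -/
def ple (b : ℕ) (p q : ℤ × ℤ) : Prop :=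
  p = q ∨ (p.1 < q.1 ∧ p.2 < q.2) ∨
    (p.2 ≤ (b : ℤ) ∧ (b : ℤ) + 1 ≤ q.2 ∧ p.2 < q.2 - (b : ℤ))

def vert (p : ℤ × ℤ) : ℕ → List (ℤ × ℤ)
  | 0 => [p]
  | n+1 => p :: vert (p.1, p.2 - 1) n

lemma vert_ne_nil (p : ℤ × ℤ) (n : ℕ) : vert p n ≠ [] := by
  cases n <;> simp [vert]

lemma vert_head (p : ℤ × ℤ) (n : ℕ) : (vert p n).head? = some p := by
  cases n <;> simp [vert]

lemma vert_last (p : ℤ × ℤ) (n : ℕ) : (vert p n).getLast? = some (p.1, p.2 - n) := by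
  induction n generalizing p with
  | zero => simp [vert]
  | succ n ih =>
    rw [show vert p (n+1) = [p] ++ vert (p.1, p.2 - 1) n from rfl,
      List.getLast?_append_of_ne_nil _ (vert_ne_nil _ _), ih]
    congr 1
    push_cast
    ring_nf

lemma vert_chain (p : ℤ × ℤ) (n : ℕ) : List.Chain' Step (vert p n) := by
  induction n generalizing p with
  | zero => simp [vert, List.Chain', List.isChain_singleton]
  | succ n ih =>
    rw [vert, List.Chain', List.isChain_cons]
    refine ⟨?_, ih _⟩
    intro y hy
    rw [vert_head] at hy
    simp only [Option.mem_def, Option.some_inj] at hy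
    subst hy
    right
    simp only [Prod.ext_iff, Prod.fst_add, Prod.snd_add]
    constructor <;> omega

lemma vert_mem (p q : ℤ × ℤ) (n : ℕ) (h1 : q.1 = p.1) (h2 : p.2 - n ≤ q.2)
    (h3 : q.2 ≤ p.2) : q ∈ vert p n := by
  induction n generalizing p with
  | zero =>
    simp only [vert, List.mem_singleton]
    exact Prod.ext_iff.mpr ⟨h1, le_antisymm h3 (by simpa using h2)⟩
  | succ n ih =>
    rw [vert, List.mem_cons]
    rcases eq_or_lt_of_le h3 with h | h
    · exact Or.inl (Prod.ext_iff.mpr ⟨h1, h⟩)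
    · refine Or.inr (ih (p.1, p.2 - 1) h1 ?_ ?_) <;> push_cast at h2 ⊢ <;> omega

def stair (F : ℕ → ℤ) : ℕ → List (ℤ × ℤ)
  | 0 => []
  | n+1 => stair F n ++ vert ((n:ℤ)+1, F n) ((F n - F (n+1)).toNat)

lemma stair_ne_nil (F : ℕ → ℤ) (n : ℕ) : stair F (n+1) ≠ [] := by
  simp [stair, vert_ne_nil]

lemma stair_head (F : ℕ → ℤ) (n : ℕ) : (stair F (n+1)).head? = some (1, F 0) := by
  induction n with
  | zero => simp [stair, vert_head]
  | succ n ih =>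
    rw [show stair F (n+2) = stair F (n+1) ++ _ from rfl,
      List.head?_append_of_ne_nil _ (stair_ne_nil F n), ih]

lemma stair_last (F : ℕ → ℤ) (Hmono : ∀ i, F (i+1) ≤ F i) (n : ℕ) :
    (stair F (n+1)).getLast? = some ((n:ℤ)+1, F (n+1)) := by
  rw [show stair F (n+1) = stair F n ++ _ from rfl,
    List.getLast?_append_of_ne_nil _ (vert_ne_nil _ _), vert_last]
  have := Hmono n
  congr 2
  omega

lemma stair_chain (F : ℕ → ℤ) (Hmono : ∀ i, F (i+1) ≤ F i) (n : ℕ) :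
    List.Chain' Step (stair F n) := by
  induction n with
  | zero => simp [stair, List.Chain', List.isChain_nil]
  | succ n ih =>
    rw [show stair F (n+1) = stair F n ++ _ from rfl]
    refine List.IsChain.append ih (vert_chain _ _) ?_
    intro x hx y hy
    cases n with
    | zero => simp [stair] at hx
    | succ m =>
      rw [stair_last F Hmono] at hx
      rw [vert_head] at hy
      simp only [Option.mem_def, Option.some_inj] at hx hy
      subst hx; subst hy
      left
      simp only [Prod.ext_iff, Prod.fst_add, Prod.snd_add]
      constructor <;> push_cast <;> omega

lemma stair_mem (F : ℕ → ℤ) (Hmono : ∀ i, F (i+1) ≤ F i) (n : ℕ) (q : ℤ × ℤ)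
    (m : ℕ) (hm : m < n) (hx : q.1 = (m:ℤ)+1) (h2 : F (m+1) ≤ q.2) (h3 : q.2 ≤ F m) :
    q ∈ stair F n := by
  induction n with
  | zero => omega
  | succ n ih =>
    rw [show stair F (n+1) = stair F n ++ _ from rfl, List.mem_append]
    by_cases hmn : m < n
    · exact Or.inl (ih hmn)
    · have hmn' : m = n := by omega
      subst hmn'
      refine Or.inr (vert_mem _ _ _ hx ?_ h3)
      have := Hmono m
      simp only
      omega

lemma exists_H (a b : ℕ) (ha : 2 ≤ a) (hab : a ≤ b) (S : Set (ℤ × ℤ))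
    (hS : ∀ p ∈ S, memP a b p) (hA : IsAntichain (ple b) S) :
    ∃ H : ℤ, 1 ≤ H ∧ H ≤ (b:ℤ) ∧ ∀ p ∈ S, H ≤ p.2 ∧ p.2 ≤ (b:ℤ) + H := by
  rcases S.eq_empty_or_nonempty with hSe | hSne
  · exact ⟨1, le_refl _, by omega, by simp [hSe]⟩
  · set Y : Set ℤ := Prod.snd '' S with hY
    have hYne : Y.Nonempty := hSne.image _
    have hYbdd : BddAbove Y := ⟨2*(b:ℤ), by rintro y ⟨p, hp, rfl⟩; exact (hS p hp).2.2.2⟩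
    have key : ∀ p ∈ S, sSup Y ≤ p.2 + b := by
      intro p hp
      refine csSup_le hYne ?_
      rintro y ⟨q, hq, rfl⟩
      have hps := hS p hp
      have hqs := hS q hq
      by_cases hq2 : q.2 ≤ (b:ℤ)
      · have := hps.2.2.1; omega
      · by_cases hp2 : p.2 ≤ (b:ℤ)
        · have hne : p ≠ q := by intro h; rw [h] at hp2; omega
          have hnc := hA hp hq hne
          by_contra hcon
          exact hnc (Or.inr (Or.inr ⟨hp2, by omega, by omega⟩))
        · have := hqs.2.2.2; omega
    have h2b : sSup Y ≤ 2*(b:ℤ) :=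
      csSup_le hYne (by rintro y ⟨p, hp, rfl⟩; exact (hS p hp).2.2.2)
    refine ⟨max 1 (sSup Y - b), le_max_left _ _, max_le (by omega) (by omega), ?_⟩
    intro p hp
    have hps := hS p hp
    constructor
    · exact max_le hps.2.2.1 (by have := key p hp; omega)
    · have h1 : p.2 ≤ sSup Y := le_csSup hYbdd ⟨p, hp, rfl⟩
      have h2 : sSup Y - b ≤ max 1 (sSup Y - b) := le_max_right _ _
      omega

theorem stmt_7 (a b : ℕ) (ha : 2 ≤ a) (hab : a ≤ b) (S : Set (ℤ × ℤ))
    (hS : ∀ p ∈ S, memP a b p) (hA : IsAntichain (ple b) S) :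
    ∃ h : ℕ, 1 ≤ h ∧ h ≤ b ∧ ∃ l : List (ℤ × ℤ),
      IsPathFromTo l (1, (b : ℤ) + (h : ℤ)) ((a : ℤ), (h : ℤ)) ∧
      S ⊆ {x | x ∈ l} := by
  obtain ⟨H, hH1, hHb, hHS⟩ := exists_H a b ha hab S hS hA
  set T : ℕ → Set ℤ := fun n => {y | ∃ p ∈ S, p.1 ≤ (n:ℤ) ∧ p.2 = y} with hT
  set F : ℕ → ℤ := fun n => if a ≤ n then H else sInf (insert ((b:ℤ)+H) (T n)) with hF
  have Hlb : ∀ n : ℕ, ∀ y ∈ insert ((b:ℤ)+H) (T n), H ≤ y := by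
    intro n y hy
    rcases hy with rfl | ⟨p, hp, -, rfl⟩
    · omega
    · exact (hHS p hp).1
  have Hbdd : ∀ n, BddBelow (insert ((b:ℤ)+H) (T n)) := fun n => ⟨H, Hlb n⟩
  have Hne : ∀ n, (insert ((b:ℤ)+H) (T n)).Nonempty := fun n => ⟨_, Set.mem_insert _ _⟩
  have Hmono : ∀ i, F (i+1) ≤ F i := by
    intro i
    by_cases h1 : a ≤ i
    · simp [hF, h1, show a ≤ i+1 by omega]
    · by_cases h2 : a ≤ i+1
      · simp only [hF, if_pos h2, if_neg h1]
        exact le_csInf (Hne i) (Hlb i)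
      · simp only [hF, if_neg h1, if_neg h2]
        refine csInf_le_csInf (Hbdd (i+1)) (Hne i) ?_
        apply Set.insert_subset_insert
        rintro y ⟨p, hp, hpi, rfl⟩
        exact ⟨p, hp, by push_cast at hpi ⊢; omega, rfl⟩
  have hF0 : F 0 = (b:ℤ) + H := by
    have hT0 : T 0 = ∅ := by
      ext y
      simp only [hT, Set.mem_setOf_eq, Set.mem_empty_iff_false, iff_false, not_exists]
      rintro p ⟨hp, hple, rfl⟩
      have := (hS p hp).1
      omega
    simp [hF, hT0, show ¬ a ≤ 0 by omega]
  have hcast : (H.toNat : ℤ) = H := Int.toNat_of_nonneg (by omega)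
  obtain ⟨a', rfl⟩ : ∃ a', a = a' + 1 := ⟨a - 1, by omega⟩
  refine ⟨H.toNat, by omega, by omega, stair F (a'+1),
    ⟨stair_chain F Hmono (a'+1), ?_, ?_⟩, ?_⟩
  · rw [stair_head, hF0, hcast]
  · rw [stair_last F Hmono, hcast,
      show F (a'+1) = H by simp [hF]]
    congr 1
  · intro p hp
    simp only [Set.mem_setOf_eq]
    have hps := hS p hp
    have hm : ((p.1 - 1).toNat : ℤ) = p.1 - 1 := Int.toNat_of_nonneg (by have := hps.1; omega)
    have hma : (p.1 - 1).toNat < a' + 1 := by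
      have := hps.2.1; omega
    refine stair_mem F Hmono (a'+1) p (p.1 - 1).toNat hma (by omega) ?_ ?_
    · by_cases hc : a' + 1 ≤ (p.1 - 1).toNat + 1
      · simp only [hF, if_pos hc]
        exact (hHS p hp).1
      · simp only [hF, if_neg hc]
        exact csInf_le (Hbdd _) (Set.mem_insert_of_mem _ ⟨p, hp, by push_cast; omega, rfl⟩)
    · simp only [hF, if_neg (show ¬ a' + 1 ≤ (p.1 - 1).toNat by omega)]
      refine le_csInf (Hne _) ?_
      intro y hy
      rcases hy with rfl | ⟨q, hq, hqm, rfl⟩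
      · exact (hHS p hp).2
      · have hqlt : q.1 < p.1 := by omega
        have hne : q ≠ p := fun h => by rw [h] at hqlt; omega
        by_contra hcon
        exact hA hq hp hne (Or.inr (Or.inl ⟨hqlt, by omega⟩))
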